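/- arXiv:1805.09647 — 2 statements merged into one kernel-verified Lean document; each statement's English description precedes it below -/
import Mathlib

section
/- Let q be a real number with 0 ≤ q < 1. Then the family (d,m) ↦ q^{md}/m indexed by pairs of positive integers (d,m) is summable, the series ∑_{d≥1} p(d)·q^d converges, and exp( ∑_{d≥1} ∑_{m≥1} q^{md}/m ) = 1 + ∑_{d≥1} p(d)·q^d, where p(d) denotes the number of partitions of the positive integer d. -/
open scoped ENNReal

/-- Multiplicity vectors `c : Fin N → ℕ` of weight `n` correspond to partitions of `n`
with all parts at most `N`. -/
def expLogPartition.partEquiv (N n : ℕ) :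
    {c : Fin N → ℕ // ∑ i : Fin N, ((i : ℕ) + 1) * c i = n} ≃
      {p : n.Partition // ∀ j ∈ p.parts, j ≤ N} where
  toFun c := ⟨⟨∑ i : Fin N, Multiset.replicate (c.1 i) ((i : ℕ) + 1), by
      intro j hj
      rw [Multiset.mem_sum] at hj
      obtain ⟨i, -, hi⟩ := hj
      rw [Multiset.eq_of_mem_replicate hi]
      exact Nat.succ_pos _, by
      rw [Multiset.sum_sum]
      simp_rw [Multiset.sum_replicate, smul_eq_mul]
      exact (Finset.sum_congr rfl fun i _ => mul_comm _ _).trans c.2⟩, by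
      intro j hj
      rw [Multiset.mem_sum] at hj
      obtain ⟨i, -, hi⟩ := hj
      rw [Multiset.eq_of_mem_replicate hi]
      exact Nat.succ_le_of_lt i.2⟩
  invFun p := ⟨fun i => p.1.parts.count ((i : ℕ) + 1), by
      have hsub : p.1.parts.toFinset ⊆ (Finset.range N).map ⟨Nat.succ, Nat.succ_injective⟩ := by
        intro j hj
        rw [Multiset.mem_toFinset] at hj
        rw [Finset.mem_map]
        have h1 : 0 < j := p.1.parts_pos hj
        have h2 : j ≤ N := p.2 j hj
        exact ⟨j - 1, Finset.mem_range.2 (by omega),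
          by simp only [Function.Embedding.coeFn_mk]; omega⟩
      have h0 := Finset.sum_multiset_count_of_subset p.1.parts _ hsub
      rw [Finset.sum_map] at h0
      simp only [Function.Embedding.coeFn_mk, smul_eq_mul] at h0
      rw [← Fin.sum_univ_eq_sum_range
        (fun i => Multiset.count (Nat.succ i) p.1.parts * Nat.succ i) N] at h0
      have h2 : ∑ i : Fin N, ((i : ℕ) + 1) * Multiset.count ((i : ℕ) + 1) p.1.parts
          = p.1.parts.sum := by
        rw [h0]; exact Finset.sum_congr rfl fun i _ => mul_comm _ _
      exact h2.trans p.1.parts_sum⟩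
  left_inv := by
    rintro ⟨c, hc⟩
    ext i
    simp only
    rw [Multiset.count_sum']
    simp_rw [Multiset.count_replicate]
    rw [Finset.sum_eq_single i]
    · simp
    · intro b _ hb
      rw [if_neg]
      omega
    · simp
  right_inv := by
    rintro ⟨p, hp⟩
    ext j
    simp only
    rw [Multiset.count_sum']
    simp_rw [Multiset.count_replicate]
    by_cases hj : ∃ i : Fin N, (i : ℕ) + 1 = j
    · obtain ⟨i, rfl⟩ := hj
      rw [Finset.sum_eq_single i]
      · simp
      · intro b _ hb; rw [if_neg]; omega
      · simp
    · push_neg at hj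
      rw [Finset.sum_eq_zero]
      · symm
        rw [Multiset.count_eq_zero]
        intro hmem
        have h1 : 0 < j := p.parts_pos hmem
        have h2 : j ≤ N := hp j hmem
        exact hj ⟨j - 1, by omega⟩ (by simp; omega)
      · intro b _
        rw [if_neg (hj b)]

theorem expLogPartition.prod_tsum_pow (r : ℝ≥0∞) : ∀ (N : ℕ) (w : Fin N → ℕ),
    ∏ i : Fin N, ∑' k : ℕ, r ^ (w i * k) = ∑' c : Fin N → ℕ, r ^ (∑ i : Fin N, w i * c i) := by
  intro N
  induction N with
  | zero =>
    intro w
    haveI : Unique (Fin 0 → ℕ) := ⟨⟨fun i => i.elim0⟩, fun f => funext fun i => i.elim0⟩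
    rw [tsum_eq_single default (fun b hb => absurd (Subsingleton.elim b default) hb)]
    simp
  | succ N ih =>
    intro w
    rw [Fin.prod_univ_succ, ih (fun i => w i.succ)]
    calc (∑' k : ℕ, r ^ (w 0 * k)) * ∑' c : Fin N → ℕ, r ^ (∑ i : Fin N, w i.succ * c i)
        = ∑' k : ℕ, ∑' c : Fin N → ℕ, r ^ (w 0 * k) * r ^ (∑ i : Fin N, w i.succ * c i) := by
          rw [← ENNReal.tsum_mul_right]
          exact tsum_congr fun k => ENNReal.tsum_mul_left.symm
      _ = ∑' p : ℕ × (Fin N → ℕ), r ^ (w 0 * p.1) * r ^ (∑ i : Fin N, w i.succ * p.2 i) :=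
          ENNReal.tsum_prod.symm
      _ = ∑' p : ℕ × (Fin N → ℕ),
            r ^ (∑ i : Fin (N+1), w i * (Fin.consEquiv (fun _ => ℕ)) p i) := by
          refine tsum_congr fun p => ?_
          rw [Fin.sum_univ_succ]
          simp [Fin.consEquiv_apply, pow_add]
      _ = ∑' c : Fin (N+1) → ℕ, r ^ (∑ i : Fin (N+1), w i * c i) :=
          (Fin.consEquiv (fun _ => ℕ)).tsum_eq (fun c => r ^ (∑ i : Fin (N+1), w i * c i))

theorem expLogPartition.tsum_pow_weight (r : ℝ≥0∞) (N : ℕ) :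
    ∑' c : Fin N → ℕ, r ^ (∑ i : Fin N, ((i : ℕ) + 1) * c i)
      = ∑' n : ℕ, (Nat.card {p : n.Partition // ∀ j ∈ p.parts, j ≤ N} : ℝ≥0∞) * r ^ n := by
  set W : (Fin N → ℕ) → ℕ := fun c => ∑ i : Fin N, ((i : ℕ) + 1) * c i with hW
  rw [← (Equiv.sigmaFiberEquiv W).tsum_eq (fun c => r ^ W c)]
  have h1 : ∀ x : Σ n : ℕ, {c // W c = n},
      r ^ W ((Equiv.sigmaFiberEquiv W) x) = r ^ x.1 := by
    rintro ⟨n, c, hc⟩; simp [hc]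
  rw [tsum_congr h1, ENNReal.tsum_sigma (fun n (_ : {c // W c = n}) => r ^ n)]
  refine tsum_congr fun n => ?_
  rw [← (expLogPartition.partEquiv N n).symm.tsum_eq (fun _ => r ^ n)]
  cases nonempty_fintype {p : n.Partition // ∀ j ∈ p.parts, j ≤ N}
  rw [tsum_fintype]
  rw [Finset.sum_const, nsmul_eq_mul, Finset.card_univ, Nat.card_eq_fintype_card]

theorem expLogPartition.partial_gf (q : ℝ) (h0 : 0 ≤ q) (h1 : q < 1) (N : ℕ) :
    Summable (fun n : ℕ =>
      (Nat.card {p : n.Partition // ∀ j ∈ p.parts, j ≤ N} : ℝ) * q ^ n) ∧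
    ∑' n : ℕ, (Nat.card {p : n.Partition // ∀ j ∈ p.parts, j ≤ N} : ℝ) * q ^ n
      = ∏ i ∈ Finset.range N, (1 - q ^ (i + 1))⁻¹ := by
  set r : ℝ≥0∞ := ENNReal.ofReal q with hr
  have hr1 : r < 1 := by
    rw [hr]; exact ENNReal.ofReal_lt_one.2 h1
  have hpow : ∀ d : ℕ, r ^ (d + 1) < 1 := by
    intro d
    calc r ^ (d+1) = r ^ d * r := by ring
      _ ≤ 1 * r := by gcongr; exact pow_le_one' hr1.le d
      _ = r := one_mul r
      _ < 1 := hr1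
  have hsub_ne : ∀ d : ℕ, (1 - r ^ (d + 1)) ≠ 0 := by
    intro d
    simp [tsub_eq_zero_iff_le, (hpow d).not_ge]
  have hrpow : ∀ n : ℕ, (r ^ n).toReal = q ^ n := by
    intro n
    rw [hr, ← ENNReal.ofReal_pow h0, ENNReal.toReal_ofReal (by positivity)]
  have hENN : ∏ i ∈ Finset.range N, (1 - r ^ (i + 1))⁻¹
      = ∑' n : ℕ, (Nat.card {p : n.Partition // ∀ j ∈ p.parts, j ≤ N} : ℝ≥0∞) * r ^ n := by
    rw [← Fin.prod_univ_eq_prod_range (fun i => (1 - r ^ (i + 1))⁻¹) N]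
    have h2 : ∀ i : Fin N, (1 - r ^ ((i : ℕ) + 1))⁻¹ = ∑' k : ℕ, r ^ (((i : ℕ) + 1) * k) := by
      intro i
      rw [← ENNReal.tsum_geometric (r ^ ((i : ℕ) + 1))]
      exact tsum_congr fun k => (pow_mul r _ k).symm
    rw [Finset.prod_congr rfl fun i _ => h2 i]
    rw [expLogPartition.prod_tsum_pow r N (fun i => (i : ℕ) + 1)]
    exact expLogPartition.tsum_pow_weight r N
  have hne_top : (∑' n : ℕ,
      (Nat.card {p : n.Partition // ∀ j ∈ p.parts, j ≤ N} : ℝ≥0∞) * r ^ n) ≠ ⊤ := by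
    rw [← hENN]
    exact ENNReal.prod_ne_top fun i _ => ENNReal.inv_ne_top.2 (hsub_ne i)
  have hterm_ne : ∀ n : ℕ,
      (Nat.card {p : n.Partition // ∀ j ∈ p.parts, j ≤ N} : ℝ≥0∞) * r ^ n ≠ ⊤ := by
    intro n
    exact ENNReal.mul_ne_top (ENNReal.natCast_ne_top _)
      (ENNReal.pow_ne_top (by rw [hr]; exact ENNReal.ofReal_ne_top))
  have hterm_toReal : ∀ n : ℕ,
      ((Nat.card {p : n.Partition // ∀ j ∈ p.parts, j ≤ N} : ℝ≥0∞) * r ^ n).toReal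
        = (Nat.card {p : n.Partition // ∀ j ∈ p.parts, j ≤ N} : ℝ) * q ^ n := by
    intro n
    rw [ENNReal.toReal_mul, hrpow]
    simp
  constructor
  · have := ENNReal.summable_toReal hne_top
    exact this.congr fun n => hterm_toReal n
  · have hteq := ENNReal.tsum_toReal_eq hterm_ne
    rw [tsum_congr hterm_toReal] at hteq
    rw [← hteq, ← hENN, ENNReal.toReal_prod]
    refine Finset.prod_congr rfl fun i _ => ?_
    rw [ENNReal.toReal_inv, ENNReal.toReal_sub_of_le (hpow i).le ENNReal.one_ne_top,
      ENNReal.toReal_one, hrpow]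

theorem expLogPartition.card_le (n N : ℕ) :
    Nat.card {p : n.Partition // ∀ j ∈ p.parts, j ≤ N} ≤ Fintype.card n.Partition := by
  rw [← Nat.card_eq_fintype_card]
  exact Nat.card_le_card_of_injective _ Subtype.coe_injective

theorem expLogPartition.card_eq (n N : ℕ) (h : n ≤ N) :
    Nat.card {p : n.Partition // ∀ j ∈ p.parts, j ≤ N} = Fintype.card n.Partition := by
  rw [← Nat.card_eq_fintype_card]
  refine Nat.card_congr (Equiv.subtypeUnivEquiv fun p j hj => le_trans ?_ h)
  rw [← p.parts_sum]
  exact Multiset.le_sum_of_mem hj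

set_option maxHeartbeats 2000000 in
/-- For `0 ≤ q < 1`: the family `(d,m) ↦ q^{md}/m` over pairs of positive integers is
summable, the series `∑_{d≥1} p(d) q^d` converges, and
`exp(∑_{d≥1} ∑_{m≥1} q^{md}/m) = 1 + ∑_{d≥1} p(d) q^d`,
where `p(d)` is the number of partitions of `d`. -/
theorem exp_log_partition_gf (q : ℝ) (h0 : 0 ≤ q) (h1 : q < 1) :
    Summable (fun p : ℕ+ × ℕ+ => q ^ ((p.2 : ℕ) * (p.1 : ℕ)) / (p.2 : ℕ)) ∧
    Summable (fun d : ℕ+ => (Fintype.card (Nat.Partition (d : ℕ)) : ℝ) * q ^ (d : ℕ)) ∧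
    Real.exp (∑' d : ℕ+, ∑' m : ℕ+, q ^ ((m : ℕ) * (d : ℕ)) / (m : ℕ))
      = 1 + ∑' d : ℕ+, (Fintype.card (Nat.Partition (d : ℕ)) : ℝ) * q ^ (d : ℕ) := by
  have hgeo : Summable (fun n : ℕ => q ^ n) := summable_geometric_of_lt_one h0 h1
  -- summability of the double family
  have hf_nonneg : ∀ p : ℕ+ × ℕ+, 0 ≤ q ^ ((p.2 : ℕ) * (p.1 : ℕ)) / (p.2 : ℕ) := by
    intro p; positivity
  have hs1 : Summable (fun d : ℕ+ => q ^ (d : ℕ)) :=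
    hgeo.comp_injective PNat.coe_injective
  have hs2 : Summable (fun m : ℕ+ => q ^ ((m : ℕ) - 1)) :=
    hgeo.comp_injective PNat.natPred_injective
  have key : ∀ a b : ℕ, 1 ≤ a → 1 ≤ b → a + (b - 1) ≤ b * a := by
    intro a b ha hb
    obtain ⟨c, rfl⟩ : ∃ c, b = c + 1 := ⟨b - 1, by omega⟩
    have h := Nat.le_mul_of_pos_right c (show 0 < a by omega)
    have : (c + 1) * a = a + c * a := by ring
    omega
  have hbound : ∀ p : ℕ+ × ℕ+,
      q ^ ((p.2 : ℕ) * (p.1 : ℕ)) / (p.2 : ℕ) ≤ q ^ (p.1 : ℕ) * q ^ ((p.2 : ℕ) - 1) := by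
    rintro ⟨d, m⟩
    calc q ^ ((m : ℕ) * (d : ℕ)) / (m : ℕ) ≤ q ^ ((m : ℕ) * (d : ℕ)) :=
          div_le_self (by positivity) (by exact_mod_cast m.one_le)
      _ ≤ q ^ ((d : ℕ) + ((m : ℕ) - 1)) :=
          pow_le_pow_of_le_one h0 h1.le (key (d : ℕ) (m : ℕ) d.one_le m.one_le)
      _ = q ^ (d : ℕ) * q ^ ((m : ℕ) - 1) := pow_add q _ _
  have hsummable1 : Summable (fun p : ℕ+ × ℕ+ => q ^ ((p.2 : ℕ) * (p.1 : ℕ)) / (p.2 : ℕ)) :=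
    Summable.of_nonneg_of_le hf_nonneg hbound
      (hs1.mul_of_nonneg hs2 (fun d => by positivity) (fun m => by positivity))
  -- inner sums are logarithms
  have hinner : ∀ d : ℕ+, HasSum (fun m : ℕ+ => q ^ ((m : ℕ) * (d : ℕ)) / (m : ℕ))
      (-Real.log (1 - q ^ (d : ℕ))) := by
    intro d
    have hd : |q ^ (d : ℕ)| < 1 := by
      rw [abs_of_nonneg (by positivity)]
      exact pow_lt_one₀ h0 h1 d.pos.ne'
    have base := Real.hasSum_pow_div_log_of_abs_lt_one hd
    refine (Equiv.hasSum_iff (Equiv.pnatEquivNat.symm)).mp ?_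
    have heq : ((fun m : ℕ+ => q ^ ((m : ℕ) * (d : ℕ)) / (m : ℕ)) ∘ ⇑Equiv.pnatEquivNat.symm)
        = fun n : ℕ => (q ^ (d : ℕ)) ^ (n + 1) / ((n : ℝ) + 1) := by
      funext n
      show q ^ ((n + 1) * (d : ℕ)) / ((n + 1 : ℕ) : ℝ) = (q ^ (d : ℕ)) ^ (n + 1) / ((n : ℝ) + 1)
      rw [mul_comm, pow_mul]
      push_cast
      ring_nf
    rw [heq]
    exact base
  -- the ℕ-indexed log series
  set a : ℕ → ℝ := fun n => -Real.log (1 - q ^ (n + 1)) with ha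
  have hqlt : ∀ n : ℕ, q ^ (n + 1) < 1 := fun n => pow_lt_one₀ h0 h1 n.succ_ne_zero
  have ha_nonneg : ∀ n, 0 ≤ a n := by
    intro n
    have h2 : 0 ≤ q ^ (n + 1) := by positivity
    exact neg_nonneg.2 (Real.log_nonpos (by linarith [hqlt n]) (by linarith))
  have houter : Summable (fun d : ℕ+ => ∑' m : ℕ+, q ^ ((m : ℕ) * (d : ℕ)) / (m : ℕ)) :=
    ((summable_prod_of_nonneg hf_nonneg).mp hsummable1).2
  have houter' : Summable (fun d : ℕ+ => -Real.log (1 - q ^ (d : ℕ))) :=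
    houter.congr fun d => (hinner d).tsum_eq
  have hsum_a : Summable a :=
    ((Equiv.pnatEquivNat.symm).summable_iff.2 houter').congr fun n => rfl
  -- identify the exponent with ∑' a
  have hSS : (∑' d : ℕ+, ∑' m : ℕ+, q ^ ((m : ℕ) * (d : ℕ)) / (m : ℕ)) = ∑' n : ℕ, a n := by
    rw [tsum_congr fun d => (hinner d).tsum_eq]
    rw [← (Equiv.pnatEquivNat.symm).tsum_eq (fun d : ℕ+ => -Real.log (1 - q ^ (d : ℕ)))]
    exact tsum_congr fun n => rfl
  set S : ℝ := ∑' n : ℕ, a n with hSdef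
  -- partial products
  have hexpL : ∀ N : ℕ, Real.exp (∑ i ∈ Finset.range N, a i)
      = ∏ i ∈ Finset.range N, (1 - q ^ (i + 1))⁻¹ := by
    intro N
    rw [Real.exp_sum]
    refine Finset.prod_congr rfl fun i _ => ?_
    have hpos : 0 < 1 - q ^ (i + 1) := by linarith [hqlt i]
    rw [ha]
    rw [Real.exp_neg, Real.exp_log hpos]
  -- abbreviations
  set g : ℕ → ℝ := fun n => (Fintype.card (Nat.Partition n) : ℝ) * q ^ n with hg
  have hg_nonneg : ∀ n, 0 ≤ g n := fun n => by positivity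
  have hL_le : ∀ N : ℕ, ∑ i ∈ Finset.range N, a i ≤ S :=
    fun N => Summable.sum_le_tsum _ (fun i _ => ha_nonneg i) hsum_a
  -- summability of g
  have hgsum : Summable g := by
    refine summable_of_sum_range_le hg_nonneg (fun M => ?_) (c := Real.exp S)
    have h2 : ∑ n ∈ Finset.range M, g n = ∑ n ∈ Finset.range M,
        (Nat.card {p : Nat.Partition n // ∀ j ∈ p.parts, j ≤ M} : ℝ) * q ^ n := by
      refine Finset.sum_congr rfl fun n hn => ?_
      rw [expLogPartition.card_eq n M (le_of_lt (Finset.mem_range.1 hn))]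
    rw [h2]
    calc ∑ n ∈ Finset.range M, (Nat.card {p : Nat.Partition n // ∀ j ∈ p.parts, j ≤ M} : ℝ) * q ^ n
        ≤ ∑' n : ℕ, (Nat.card {p : Nat.Partition n // ∀ j ∈ p.parts, j ≤ M} : ℝ) * q ^ n :=
          Summable.sum_le_tsum _ (fun n _ => by positivity) (expLogPartition.partial_gf q h0 h1 M).1
      _ = ∏ i ∈ Finset.range M, (1 - q ^ (i + 1))⁻¹ := (expLogPartition.partial_gf q h0 h1 M).2
      _ = Real.exp (∑ i ∈ Finset.range M, a i) := (hexpL M).symm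
      _ ≤ Real.exp S := Real.exp_le_exp.2 (hL_le M)
  set T : ℝ := ∑' n : ℕ, g n with hT
  -- squeeze
  have hFle : ∀ N : ℕ, Real.exp (∑ i ∈ Finset.range N, a i) ≤ T := by
    intro N
    rw [hexpL N, ← (expLogPartition.partial_gf q h0 h1 N).2]
    refine Summable.tsum_le_tsum (fun n => ?_) (expLogPartition.partial_gf q h0 h1 N).1 hgsum
    have := expLogPartition.card_le n N
    have hc : (Nat.card {p : Nat.Partition n // ∀ j ∈ p.parts, j ≤ N} : ℝ)
        ≤ (Fintype.card (Nat.Partition n) : ℝ) := by exact_mod_cast this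
    have : (0:ℝ) ≤ q ^ n := by positivity
    exact mul_le_mul_of_nonneg_right hc this
  have hFge : ∀ N : ℕ, ∑ n ∈ Finset.range (N + 1), g n
      ≤ Real.exp (∑ i ∈ Finset.range N, a i) := by
    intro N
    rw [hexpL N, ← (expLogPartition.partial_gf q h0 h1 N).2]
    have h2 : ∑ n ∈ Finset.range (N + 1), g n = ∑ n ∈ Finset.range (N + 1),
        (Nat.card {p : Nat.Partition n // ∀ j ∈ p.parts, j ≤ N} : ℝ) * q ^ n := by
      refine Finset.sum_congr rfl fun n hn => ?_
      rw [expLogPartition.card_eq n N (Nat.lt_succ_iff.1 (Finset.mem_range.1 hn))]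
    rw [h2]
    exact Summable.sum_le_tsum _ (fun n _ => by positivity) (expLogPartition.partial_gf q h0 h1 N).1
  have htendsto_exp : Filter.Tendsto (fun N => Real.exp (∑ i ∈ Finset.range N, a i))
      Filter.atTop (nhds (Real.exp S)) :=
    (Real.continuous_exp.tendsto S).comp hsum_a.hasSum.tendsto_sum_nat
  have htendsto_lower : Filter.Tendsto (fun N : ℕ => ∑ n ∈ Finset.range (N + 1), g n)
      Filter.atTop (nhds T) :=
    hgsum.hasSum.tendsto_sum_nat.comp (Filter.tendsto_add_atTop_nat 1)
  have htendsto_T : Filter.Tendsto (fun N => Real.exp (∑ i ∈ Finset.range N, a i))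
      Filter.atTop (nhds T) :=
    tendsto_of_tendsto_of_tendsto_of_le_of_le htendsto_lower tendsto_const_nhds hFge hFle
  have hmain : Real.exp S = T := tendsto_nhds_unique htendsto_exp htendsto_T
  -- rewrite T
  have hg0 : g 0 = 1 := by simp [hg]
  have hshift : (∑' n : ℕ, g (n + 1))
      = ∑' d : ℕ+, (Fintype.card (Nat.Partition (d : ℕ)) : ℝ) * q ^ (d : ℕ) := by
    rw [← (Equiv.pnatEquivNat.symm).tsum_eq
      (fun d : ℕ+ => (Fintype.card (Nat.Partition (d : ℕ)) : ℝ) * q ^ (d : ℕ))]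
    exact tsum_congr fun n => rfl
  have hTval : T = 1 + ∑' d : ℕ+, (Fintype.card (Nat.Partition (d : ℕ)) : ℝ) * q ^ (d : ℕ) := by
    rw [hT, Summable.tsum_eq_zero_add hgsum, hg0, hshift]
  refine ⟨hsummable1, ?_, ?_⟩
  · exact hgsum.comp_injective PNat.coe_injective
  · rw [hSS, hmain, hTval]
end

section
/- Let q be a real number with 0 ≤ q < 1. Then the family d ↦ (1−q^d)^{−1} indexed by positive integers d is multipliable, the series ∑_{d≥1} p(d)·q^d converges, and ∏_{d≥1} (1−q^d)^{−1} = 1 + ∑_{d≥1} p(d)·q^d, where p(d) denotes the number of partitions of the positive integer d. -/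
open Finset Filter Topology Multiset

namespace EulerGF

abbrev Restricted (N n : ℕ) : Type := {p : n.Partition // ∀ i ∈ p.parts, i ≤ N}

lemma sigma_ext {N : ℕ} {x y : Σ n, Restricted N n} (h : x.2.1.parts = y.2.1.parts) :
    x = y := by
  obtain ⟨n, p, hp⟩ := x
  obtain ⟨m, r, hr⟩ := y
  obtain rfl : n = m := by rw [← p.parts_sum, ← r.parts_sum, h]
  exact congrArg (Sigma.mk n) (Subtype.ext (Nat.Partition.ext h))

lemma filter_add_replicate (s : Multiset ℕ) (b : ℕ) :
    s.filter (· ≠ b) + replicate (count b s) b = s := by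
  rw [← Multiset.filter_eq' s b, add_comm]
  have := Multiset.filter_add_not (fun a => a = b) s
  convert this using 2

def stepEquiv (N : ℕ) : (Σ n, Restricted (N + 1) n) ≃ ℕ × Σ n, Restricted N n where
  toFun x := (x.2.1.parts.count (N + 1),
    ⟨(x.2.1.parts.filter (· ≠ N + 1)).sum,
      ⟨x.2.1.parts.filter (· ≠ N + 1), fun hi => x.2.1.parts_pos (mem_of_mem_filter hi), rfl⟩,
      fun i hi => by
        have h1 := x.2.2 i (mem_of_mem_filter hi)
        have h2 := of_mem_filter hi
        omega⟩)
  invFun y := ⟨(y.2.2.1.parts + replicate y.1 (N + 1)).sum,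
    ⟨y.2.2.1.parts + replicate y.1 (N + 1), fun {i} hi => by
        rcases Multiset.mem_add.1 hi with h | h
        · exact y.2.2.1.parts_pos h
        · rw [eq_of_mem_replicate h]; omega, rfl⟩,
      fun i hi => by
        rcases Multiset.mem_add.1 hi with h | h
        · exact le_trans (y.2.2.2 i h) (Nat.le_succ N)
        · rw [eq_of_mem_replicate h]⟩
  left_inv x := by
    apply sigma_ext
    show x.2.1.parts.filter (· ≠ N + 1) + replicate (x.2.1.parts.count (N + 1)) (N + 1)
        = x.2.1.parts
    rw [← Multiset.filter_eq' x.2.1.parts (N + 1)]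
    have := Multiset.filter_add_not (fun a => a = N + 1) x.2.1.parts
    rw [add_comm]
    convert this using 2
  right_inv y := by
    obtain ⟨k, m, p, hp⟩ := y
    have hcount : count (N + 1) p.parts = 0 :=
      Multiset.count_eq_zero.2 fun h => by have := hp _ h; omega
    have hfilter : p.parts.filter (· ≠ N + 1) = p.parts :=
      Multiset.filter_eq_self.2 fun i hi => by have := hp _ hi; omega
    refine Prod.ext ?_ (sigma_ext ?_)
    · show count (N + 1) (p.parts + replicate k (N + 1)) = k
      simp [hcount]
    · show (p.parts + replicate k (N + 1)).filter (· ≠ N + 1) = p.parts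
      rw [Multiset.filter_add, hfilter]
      rw [Multiset.filter_eq_nil.2 fun a ha => by simp [eq_of_mem_replicate ha], add_zero]

variable {q : ℝ} (h0 : 0 ≤ q) (h1 : q < 1)

def zeroEquiv : (Σ n, Restricted 0 n) ≃ Unit where
  toFun _ := ()
  invFun _ := ⟨0, ⟨default, by simp⟩⟩
  left_inv x := by
    apply sigma_ext
    show (default : Nat.Partition 0).parts = x.2.1.parts
    rw [Nat.Partition.partition_zero_parts]
    exact (Multiset.eq_zero_of_forall_notMem fun i hi => by
      have := x.2.1.parts_pos hi; have := x.2.2 i hi; omega).symm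
  right_inv _ := rfl

set_option maxHeartbeats 1000000 in
include h0 h1 in
lemma hasSum_restricted (N : ℕ) :
    HasSum (fun x : Σ n, Restricted N n => q ^ x.1)
      (∏ d ∈ Finset.range N, (1 - q ^ (d + 1))⁻¹) := by
  induction N with
  | zero =>
    rw [Finset.prod_range_zero]
    refine (Equiv.hasSum_iff zeroEquiv.symm).1 ?_
    have hfe : (fun x : Σ n, Restricted 0 n => q ^ x.1) ∘ zeroEquiv.symm = fun _ => (1 : ℝ) :=
      funext fun u => pow_zero q
    rw [hfe]
    simpa using hasSum_fintype (fun _ : Unit => (1 : ℝ))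
  | succ N ih =>
    have hq : q ^ (N + 1) < 1 := pow_lt_one₀ h0 h1 (Nat.succ_ne_zero N)
    have hgeo : HasSum (fun k : ℕ => (q ^ (N + 1)) ^ k) (1 - q ^ (N + 1))⁻¹ :=
      hasSum_geometric_of_lt_one (pow_nonneg h0 _) hq
    have hmul := hgeo.mul ih (hgeo.summable.mul_of_nonneg ih.summable
      (fun k => pow_nonneg (pow_nonneg h0 _) _) (fun x => pow_nonneg h0 _))
    have hcomp : ((fun y : ℕ × Σ n, Restricted N n => (q ^ (N + 1)) ^ y.1 * q ^ y.2.1) ∘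
        stepEquiv N) = fun x : Σ n, Restricted (N + 1) n => q ^ x.1 := by
      funext x
      show (q ^ (N + 1)) ^ (count (N + 1) x.2.1.parts) *
          q ^ (x.2.1.parts.filter (· ≠ N + 1)).sum = q ^ x.1
      conv_rhs => rw [← x.2.1.parts_sum, ← filter_add_replicate x.2.1.parts (N + 1),
        Multiset.sum_add, Multiset.sum_replicate, smul_eq_mul, pow_add, pow_mul']
      exact mul_comm _ _
    have := ((Equiv.hasSum_iff (stepEquiv N)).2 hmul)
    rw [hcomp] at this
    rw [Finset.prod_range_succ, mul_comm]
    exact this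


/-- Number of partitions of `n` with parts at most `N`. -/
def cnt (N n : ℕ) : ℕ := Fintype.card (Restricted N n)

include h0 h1 in
lemma hasSum_cnt (N : ℕ) :
    HasSum (fun n : ℕ => (cnt N n : ℝ) * q ^ n)
      (∏ d ∈ Finset.range N, (1 - q ^ (d + 1))⁻¹) := by
  refine (hasSum_restricted h0 h1 N).sigma fun n => ?_
  have := hasSum_fintype (fun _ : Restricted N n => q ^ n)
  simpa [cnt, Finset.card_univ, nsmul_eq_mul] using this

lemma cnt_eq {N n : ℕ} (hn : n ≤ N) : cnt N n = Fintype.card (Nat.Partition n) :=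
  Fintype.card_congr (Equiv.subtypeUnivEquiv fun p i hi =>
    le_trans (by rw [← p.parts_sum]; exact Multiset.le_sum_of_mem hi) hn)

lemma cnt_le (N n : ℕ) : cnt N n ≤ Fintype.card (Nat.Partition n) :=
  Fintype.card_le_of_injective Subtype.val Subtype.val_injective

include h0 h1 in
lemma prod_le_exp (N : ℕ) :
    ∏ d ∈ Finset.range N, (1 - q ^ (d + 1))⁻¹ ≤ Real.exp ((1 - q)⁻¹ * (1 - q)⁻¹) := by
  have hq1 : 0 < 1 - q := by linarith
  have hpos : ∀ d : ℕ, 0 < 1 - q ^ (d + 1) := fun d => by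
    have : q ^ (d + 1) < 1 := pow_lt_one₀ h0 h1 (Nat.succ_ne_zero d); linarith
  have hfac : ∀ d ∈ Finset.range N, (1 - q ^ (d + 1))⁻¹ ≤ Real.exp (q ^ (d + 1) * (1 - q)⁻¹) := by
    intro d _
    have h2 : q ^ (d + 1) ≤ q := by
      calc q ^ (d + 1) ≤ q ^ 1 := pow_le_pow_of_le_one h0 h1.le (by omega)
        _ = q := pow_one q
    have h3 : 1 - q ≤ 1 - q ^ (d + 1) := by linarith
    have key : (1 - q ^ (d + 1))⁻¹ ≤ 1 + q ^ (d + 1) * (1 - q)⁻¹ := by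
      rw [inv_le_iff_one_le_mul₀ (hpos d)]
      have expand : (1 + q ^ (d + 1) * (1 - q)⁻¹) * (1 - q ^ (d + 1))
          = 1 - q ^ (d + 1) + q ^ (d + 1) * ((1 - q)⁻¹ * (1 - q ^ (d + 1))) := by ring
      rw [expand]
      have h4 : 1 ≤ (1 - q)⁻¹ * (1 - q ^ (d + 1)) := by
        rw [← div_eq_inv_mul, le_div_iff₀ hq1]; linarith
      nlinarith [pow_nonneg h0 (d + 1)]
    refine key.trans ?_
    have := Real.add_one_le_exp (q ^ (d + 1) * (1 - q)⁻¹)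
    linarith
  calc ∏ d ∈ Finset.range N, (1 - q ^ (d + 1))⁻¹
      ≤ ∏ d ∈ Finset.range N, Real.exp (q ^ (d + 1) * (1 - q)⁻¹) :=
        Finset.prod_le_prod (fun d _ => (inv_pos.2 (hpos d)).le) hfac
    _ = Real.exp (∑ d ∈ Finset.range N, q ^ (d + 1) * (1 - q)⁻¹) := (Real.exp_sum _ _).symm
    _ ≤ Real.exp ((1 - q)⁻¹ * (1 - q)⁻¹) := by
        apply Real.exp_le_exp.2
        rw [← Finset.sum_mul]
        have hsum : ∑ d ∈ Finset.range N, q ^ (d + 1) ≤ (1 - q)⁻¹ := by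
          calc ∑ d ∈ Finset.range N, q ^ (d + 1)
              ≤ ∑ d ∈ Finset.range N, q ^ d := Finset.sum_le_sum fun d _ =>
                pow_le_pow_of_le_one h0 h1.le (by omega)
            _ ≤ ∑' d : ℕ, q ^ d := Summable.sum_le_tsum _ (fun d _ => pow_nonneg h0 d)
                (summable_geometric_of_lt_one h0 h1)
            _ = (1 - q)⁻¹ := tsum_geometric_of_lt_one h0 h1
        have : (0:ℝ) ≤ (1 - q)⁻¹ := (inv_pos.2 hq1).le
        exact mul_le_mul_of_nonneg_right hsum this

include h0 h1 in
lemma summable_main :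
    Summable (fun n : ℕ => (Fintype.card (Nat.Partition n) : ℝ) * q ^ n) := by
  apply summable_of_sum_range_le (c := Real.exp ((1 - q)⁻¹ * (1 - q)⁻¹))
    (fun n => mul_nonneg (Nat.cast_nonneg _) (pow_nonneg h0 n))
  intro N
  calc ∑ n ∈ Finset.range N, (Fintype.card (Nat.Partition n) : ℝ) * q ^ n
      = ∑ n ∈ Finset.range N, (cnt N n : ℝ) * q ^ n := Finset.sum_congr rfl fun n hn => by
        rw [cnt_eq (le_of_lt (Finset.mem_range.1 hn))]
    _ ≤ ∑' n : ℕ, (cnt N n : ℝ) * q ^ n := Summable.sum_le_tsum _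
        (fun n _ => mul_nonneg (Nat.cast_nonneg _) (pow_nonneg h0 n))
        (hasSum_cnt h0 h1 N).summable
    _ = ∏ d ∈ Finset.range N, (1 - q ^ (d + 1))⁻¹ := (hasSum_cnt h0 h1 N).tsum_eq
    _ ≤ _ := prod_le_exp h0 h1 N

include h0 h1 in
lemma tendsto_prod :
    Tendsto (fun N => ∏ d ∈ Finset.range N, (1 - q ^ (d + 1))⁻¹) atTop
      (𝓝 (∑' n : ℕ, (Fintype.card (Nat.Partition n) : ℝ) * q ^ n)) := by
  have h := tendsto_tsum_of_dominated_convergence (𝓕 := atTop)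
    (f := fun N n => (cnt N n : ℝ) * q ^ n)
    (g := fun n => (Fintype.card (Nat.Partition n) : ℝ) * q ^ n)
    (bound := fun n => (Fintype.card (Nat.Partition n) : ℝ) * q ^ n)
    (summable_main h0 h1)
    (fun n => by
      apply Tendsto.congr' ?_ tendsto_const_nhds
      filter_upwards [eventually_ge_atTop n] with N hN
      rw [cnt_eq hN])
    (Eventually.of_forall fun N n => by
      rw [Real.norm_eq_abs, abs_of_nonneg (mul_nonneg (Nat.cast_nonneg _) (pow_nonneg h0 n))]
      exact mul_le_mul_of_nonneg_right (Nat.cast_le.2 (cnt_le N n)) (pow_nonneg h0 n))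
  refine h.congr fun N => (hasSum_cnt h0 h1 N).tsum_eq

lemma prod_mono_subset {f : ℕ → ℝ} (h1 : ∀ i, 1 ≤ f i) {s t : Finset ℕ} (hst : s ⊆ t) :
    ∏ i ∈ s, f i ≤ ∏ i ∈ t, f i := by
  rw [← Finset.prod_sdiff hst]
  refine le_mul_of_one_le_left
    (Finset.prod_nonneg fun i _ => le_trans zero_le_one (h1 i)) ?_
  calc (1:ℝ) = ∏ _i ∈ t \ s, 1 := by simp
    _ ≤ ∏ i ∈ t \ s, f i := Finset.prod_le_prod (fun i _ => zero_le_one) (fun i _ => h1 i)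

end EulerGF

open EulerGF in
/-- Euler's partition generating function, analytically: for `0 ≤ q < 1`, the family
`d ↦ (1 − q^d)⁻¹` over positive integers is multipliable, the series `∑_{d≥1} p(d) q^d`
converges, and `∏_{d≥1} (1 − q^d)⁻¹ = 1 + ∑_{d≥1} p(d) q^d`, where `p(d)` is the number
of partitions of `d`. -/
theorem euler_partition_gf (q : ℝ) (h0 : 0 ≤ q) (h1 : q < 1) :
    Multipliable (fun d : ℕ+ => (1 - q ^ (d : ℕ))⁻¹) ∧
    Summable (fun d : ℕ+ => (Fintype.card (Nat.Partition (d : ℕ)) : ℝ) * q ^ (d : ℕ)) ∧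
    ∏' d : ℕ+, (1 - q ^ (d : ℕ))⁻¹
      = 1 + ∑' d : ℕ+, (Fintype.card (Nat.Partition (d : ℕ)) : ℝ) * q ^ (d : ℕ) := by
  set f : ℕ → ℝ := fun d => (1 - q ^ (d + 1))⁻¹ with hf
  set a : ℕ → ℝ := fun n => (Fintype.card (Nat.Partition n) : ℝ) * q ^ n with ha
  have hpos : ∀ d : ℕ, 0 < 1 - q ^ (d + 1) := fun d => by
    have : q ^ (d + 1) < 1 := pow_lt_one₀ h0 h1 (Nat.succ_ne_zero d); linarith
  have hone : ∀ d : ℕ, 1 ≤ f d := fun d =>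
    (one_le_inv₀ (hpos d)).2 (by have := pow_nonneg h0 (d + 1); linarith)
  have hmono : Monotone (fun s : Finset ℕ => ∏ i ∈ s, f i) := fun s t hst =>
    prod_mono_subset hone hst
  have hbdd : BddAbove (Set.range fun s : Finset ℕ => ∏ i ∈ s, f i) := by
    refine ⟨Real.exp ((1 - q)⁻¹ * (1 - q)⁻¹), ?_⟩
    rintro x ⟨s, rfl⟩
    obtain ⟨N, hsN⟩ := Finset.exists_nat_subset_range s
    exact le_trans (hmono hsN) (prod_le_exp h0 h1 N)
  have hprod : HasProd f (⨆ s : Finset ℕ, ∏ i ∈ s, f i) := tendsto_atTop_ciSup hmono hbdd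
  have hMf : Multipliable f := ⟨_, hprod⟩
  have hkey : ∏' d : ℕ, f d = ∑' n : ℕ, a n :=
    tendsto_nhds_unique hMf.hasProd.tendsto_prod_nat (tendsto_prod h0 h1)
  have hsum := summable_main h0 h1 (q := q)
  have hge : (fun d : ℕ+ => (1 - q ^ (d : ℕ))⁻¹) ∘ (Equiv.pnatEquivNat.symm) = f := by
    funext n
    simp [hf, Equiv.pnatEquivNat]
  have hae : (fun d : ℕ+ => a (d : ℕ)) ∘ (Equiv.pnatEquivNat.symm) = fun n => a (n + 1) := by
    funext n
    simp [Equiv.pnatEquivNat]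
  have hM : Multipliable (fun d : ℕ+ => (1 - q ^ (d : ℕ))⁻¹) :=
    (Equiv.pnatEquivNat.symm).multipliable_iff.1 (by rw [hge]; exact hMf)
  have hS : Summable (fun d : ℕ+ => a (d : ℕ)) :=
    (Equiv.pnatEquivNat.symm).summable_iff.1
      (by rw [hae]; exact (summable_nat_add_iff 1).2 hsum)
  refine ⟨hM, hS, ?_⟩
  have htp : ∏' d : ℕ+, (1 - q ^ (d : ℕ))⁻¹ = ∏' d : ℕ, f d := by
    rw [← Equiv.tprod_eq (Equiv.pnatEquivNat.symm) (fun d : ℕ+ => (1 - q ^ (d : ℕ))⁻¹)]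
    exact tprod_congr fun n => congrFun hge n
  have hts : ∑' d : ℕ+, a (d : ℕ) = ∑' n : ℕ, a (n + 1) := by
    rw [← Equiv.tsum_eq (Equiv.pnatEquivNat.symm) (fun d : ℕ+ => a (d : ℕ))]
    exact tsum_congr fun n => congrFun hae n
  rw [htp, hkey, hts, Summable.tsum_eq_zero_add hsum]
  congr 1
  simp [ha]
end
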